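/- Let T be a densely defined closed operator on a complex Hilbert space H such that T is invertible with bounded inverse T⁻¹, and suppose T⁻¹ is normaloid (its operator norm equals its spectral radius). If moreover the spectrum of T is empty, then a contradiction follows; hence the spectrum of T is nonempty. -/

import Mathlib

open scoped InnerProductSpace
open LinearPMap

noncomputable section

variable {H : Type*} [NormedAddCommGroup H] [InnerProductSpace ℂ H] [CompleteSpace H]

/-- `T` is paranormal: `‖Tx‖² ≤ ‖T²x‖ ‖x‖` for all `x ∈ D(T²)`. -/
def Paranormal (T : H →ₗ.[ℂ] H) : Prop :=
  ∀ (x : T.domain) (h : T x ∈ T.domain), ‖T x‖ ^ 2 ≤ ‖T ⟨T x, h⟩‖ * ‖(x : H)‖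

/-- The operator `T - μ • I`, with the same domain as `T`. -/
def shiftOp (T : H →ₗ.[ℂ] H) (μ : ℂ) : H →ₗ.[ℂ] H :=
  ⟨T.domain, T.toFun - μ • T.domain.subtype⟩

/-- `T` is bijective from its domain onto `H` with a bounded everywhere-defined inverse. -/
def HasBoundedInverse (T : H →ₗ.[ℂ] H) : Prop :=
  ∃ S : H →L[ℂ] H, (∀ y : H, ∃ hy : S y ∈ T.domain, T ⟨S y, hy⟩ = y) ∧
    ∀ x : T.domain, S (T x) = (x : H)

/-- The spectrum of a (possibly unbounded) operator `T`. -/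
def pSpectrum (T : H →ₗ.[ℂ] H) : Set ℂ :=
  {μ | ¬ HasBoundedInverse (shiftOp T μ)}

/-- `μ` is an isolated point of the spectrum of `T`. -/
def IsolatedSpectralPoint (T : H →ₗ.[ℂ] H) (μ : ℂ) : Prop :=
  μ ∈ pSpectrum T ∧ ∃ ε > 0, ∀ ν ∈ pSpectrum T, ν ≠ μ → ε ≤ dist ν μ

open Classical in
/-- The resolvent `(T - z)⁻¹` as a bounded operator (junk value `0` if `z ∈ σ(T)`). -/
def resolventOp (T : H →ₗ.[ℂ] H) (z : ℂ) : H →L[ℂ] H :=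
  if h : HasBoundedInverse (shiftOp T z) then h.choose else 0

/-- The Riesz projection `E_μ = (2πi)⁻¹ ∮_{|z-μ|=r} (z - T)⁻¹ dz`
(note `(z - T)⁻¹ = -(T - z)⁻¹`). -/
def rieszProjection (T : H →ₗ.[ℂ] H) (μ : ℂ) (r : ℝ) : H →L[ℂ] H :=
  -(2 * Real.pi * Complex.I)⁻¹ • ∮ z in C(μ, r), resolventOp T z

/-- The kernel `N(T - μ I)` as a subset of `H`. -/
def kernelSet (T : H →ₗ.[ℂ] H) (μ : ℂ) : Set H :=
  {x | ∃ h : x ∈ T.domain, T ⟨x, h⟩ = μ • x}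

/-- The range `R(T - μ I)` as a subset of `H`. -/
def rangeSet (T : H →ₗ.[ℂ] H) (μ : ℂ) : Set H :=
  Set.range fun x : T.domain => T x - μ • (x : H)


/-- If a densely defined closed operator `T` on a nonzero Hilbert space is invertible with
bounded normaloid inverse, then `σ(T)` is nonempty. -/
theorem stmt3 [Nontrivial H] (T : H →ₗ.[ℂ] H) (hdense : Dense (T.domain : Set H))
    (hclosed : T.IsClosed) (S : H →L[ℂ] H)
    (hS1 : ∀ y : H, ∃ hy : S y ∈ T.domain, T ⟨S y, hy⟩ = y)
    (hS2 : ∀ x : T.domain, S (T x) = (x : H))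
    (hnormaloid : (‖S‖₊ : ENNReal) = spectralRadius ℂ S) :
    (pSpectrum T).Nonempty := by
  by_contra hemp
  rw [Set.not_nonempty_iff_eq_empty] at hemp
  have hall : ∀ μ : ℂ, HasBoundedInverse (shiftOp T μ) := by
    intro μ
    by_contra h
    have hmem : μ ∈ pSpectrum T := h
    rw [hemp] at hmem
    exact hmem
  -- spectrum of S is contained in {0}
  have hspec : spectrum ℂ S ⊆ {0} := by
    intro ν hν
    by_contra hν0
    have hν0 : ν ≠ 0 := hν0
    set μ : ℂ := ν⁻¹ with hμ
    have hνμ : ν * μ = 1 := mul_inv_cancel₀ hν0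
    have hμν : μ * ν = 1 := inv_mul_cancel₀ hν0
    obtain ⟨R, hR1, hR2⟩ := hall μ
    have hdom : ∀ y : H, R y ∈ T.domain := fun y => (hR1 y).choose
    have hshift : ∀ x : T.domain, shiftOp T μ x = T x - μ • (x : H) := fun x => rfl
    have hf1 : ∀ y : H, (T ⟨R y, hdom y⟩ : H) = y + μ • R y := by
      intro y
      have h1 := (hR1 y).choose_spec
      replace h1 := (hshift ⟨R y, hdom y⟩).symm.trans h1
      exact sub_eq_iff_eq_add.mp h1
    have hSR : ∀ y : H, S (R y) = ν • R y - ν • S y := by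
      intro y
      have h2 : S (T ⟨R y, hdom y⟩) = R y := hS2 _
      rw [hf1, _root_.map_add, _root_.map_smul] at h2
      have h2' : μ • S (R y) = R y - S y := by
        rw [eq_sub_iff_add_eq, add_comm]; exact h2
      calc S (R y) = ν • (μ • S (R y)) := by rw [smul_smul, hνμ, one_smul]
        _ = ν • (R y - S y) := by rw [h2']
        _ = ν • R y - ν • S y := smul_sub _ _ _
    have hRS : ∀ y : H, R (S y) = ν • R y - ν • S y := by
      intro y
      have h3 := hR2 ⟨S y, (hS1 y).choose⟩
      replace h3 : R (T ⟨S y, (hS1 y).choose⟩ - μ • ((⟨S y, (hS1 y).choose⟩ : T.domain) : H)) =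
          ((⟨S y, (hS1 y).choose⟩ : T.domain) : H) := h3
      have h4 : (T ⟨S y, (hS1 y).choose⟩ : H) = y := (hS1 y).choose_spec
      rw [h4] at h3
      have hcoe : ((⟨S y, (hS1 y).choose⟩ : T.domain) : H) = S y := rfl
      rw [hcoe, _root_.map_sub, _root_.map_smul] at h3
      have h3' : μ • R (S y) = R y - S y := by
        rw [eq_sub_iff_add_eq, add_comm]
        exact (sub_eq_iff_eq_add.mp h3).symm
      calc R (S y) = ν • (μ • R (S y)) := by rw [smul_smul, hνμ, one_smul]
        _ = ν • (R y - S y) := by rw [h3']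
        _ = ν • R y - ν • S y := smul_sub _ _ _
    -- the candidate inverse of (ν - S)
    set C : H →L[ℂ] H := μ • (1 : H →L[ℂ] H) + (μ * μ) • R with hC
    have hunit : IsUnit (algebraMap ℂ (H →L[ℂ] H) ν - S) := by
      apply isUnit_iff_exists.mpr
      refine ⟨C, ?_, ?_⟩
      · ext y
        simp only [ContinuousLinearMap.mul_apply, ContinuousLinearMap.sub_apply,
          ContinuousLinearMap.add_apply, ContinuousLinearMap.smul_apply,
          ContinuousLinearMap.one_apply, Algebra.algebraMap_eq_smul_one, hC]
        rw [_root_.map_add, _root_.map_smul, _root_.map_smul, hSR]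
        match_scalars <;> (simp only [hμ]; field_simp) <;> ring
      · ext y
        simp only [ContinuousLinearMap.mul_apply, ContinuousLinearMap.sub_apply,
          ContinuousLinearMap.add_apply, ContinuousLinearMap.smul_apply,
          ContinuousLinearMap.one_apply, Algebra.algebraMap_eq_smul_one, hC]
        rw [_root_.map_sub, _root_.map_smul, hRS]
        match_scalars <;> (simp only [hμ]; field_simp) <;> ring
    exact (spectrum.mem_iff.mp hν) hunit
  -- spectral radius is 0
  have hrad : spectralRadius ℂ S = 0 := by
    apply le_antisymm _ zero_le
    rw [spectralRadius]
    apply iSup₂_le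
    intro k hk
    have : k = 0 := hspec hk
    simp [this]
  have hS0 : S = 0 := by
    have h5 : (‖S‖₊ : ENNReal) = 0 := by rw [hnormaloid, hrad]
    have hn : ‖S‖₊ = 0 := by exact_mod_cast h5
    simpa [nnnorm_eq_zero] using hn
  obtain ⟨y, hy0⟩ := exists_ne (0 : H)
  obtain ⟨hy, hTy⟩ := hS1 y
  have hSy : S y = 0 := by rw [hS0]; rfl
  have hz : (⟨S y, hy⟩ : T.domain) = 0 := by
    apply Subtype.ext
    simpa using hSy
  rw [hz, LinearPMap.map_zero] at hTy
  exact hy0 hTy.symm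
end
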